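/- Let S be a polynomial ring over a field and let 0 → K → A → B → 0 be a short exact sequence of finitely generated graded S-modules. If K_ℓ = 0 for all ℓ ≤ q, then for every p ≥ 0 the induced map Tor_p^S(A, k)_{p+q} → Tor_p^S(B, k)_{p+q} is injective; in particular β_{p,q}(A) ≤ β_{p,q}(B). -/

import Mathlib

open TensorProduct

/-- The Koszul differential `E ⊗ M_q → E ⊗ M_{q+1}` on `E := ExteriorAlgebra k V` tensored
with a graded piece, given by `ω ⊗ m ↦ ∑_i (x_i^* ⌋ ω) ⊗ (x_i • m)` for a basis `b` of the
space `V` of linear forms, where `a` is the multiplication action of `V` raising the internal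
degree by one. Restricted to `⋀^p V ⊗ M_q → ⋀^{p-1} V ⊗ M_{q+1}` it is the Koszul-type
complex computing the Koszul cohomology `K_{p,q}(M, V) = Tor_p^S(M, k)_{p+q}`. -/
noncomputable def koszulDiff (k : Type*) [Field k] {V : Type*} [AddCommGroup V] [Module k V]
    {ι : Type*} [Fintype ι] [DecidableEq ι] (b : Module.Basis ι k V)
    {M N : Type*} [AddCommGroup M] [Module k M] [AddCommGroup N] [Module k N]
    (a : V →ₗ[k] M →ₗ[k] N) :
    (ExteriorAlgebra k V ⊗[k] M) →ₗ[k] (ExteriorAlgebra k V ⊗[k] N) :=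
  ∑ i, TensorProduct.map
    (CliffordAlgebra.contractLeft (Q := (0 : QuadraticForm k V)) (b.coord i)) (a (b i))

/-- The image of `⋀^p V ⊗ M` inside `ExteriorAlgebra k V ⊗ M`. -/
noncomputable def wedgePart (k : Type*) [Field k] (V : Type*) [AddCommGroup V] [Module k V]
    (p : ℕ) (M : Type*) [AddCommGroup M] [Module k M] :
    Submodule k (ExteriorAlgebra k V ⊗[k] M) :=
  LinearMap.range (TensorProduct.map ((⋀[k]^p V).subtype) (LinearMap.id (R := k) (M := M)))

/-- The graded Betti number `β_{p,q}(M) = dim_k Tor_p^S(M,k)_{p+q} = κ_{p,q}(M,V)`, computed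
as the Koszul cohomology at the middle of `⋀^{p+1}V ⊗ M_{q-1} → ⋀^p V ⊗ M_q → ⋀^{p-1}V ⊗ M_{q+1}`:
here `Mp, Mc, Mn` are the graded pieces of `M` in internal degrees `q-1, q, q+1`, and
`aprev, acur` are the multiplication maps by linear forms. -/
noncomputable def koszulBetti (k : Type*) [Field k] {V : Type*} [AddCommGroup V] [Module k V]
    {ι : Type*} [Fintype ι] [DecidableEq ι] (b : Module.Basis ι k V)
    {Mp Mc Mn : Type*} [AddCommGroup Mp] [Module k Mp] [AddCommGroup Mc] [Module k Mc]
    [AddCommGroup Mn] [Module k Mn]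
    (aprev : V →ₗ[k] Mp →ₗ[k] Mc) (acur : V →ₗ[k] Mc →ₗ[k] Mn) (p : ℕ) : ℕ :=
  let Z : Submodule k (ExteriorAlgebra k V ⊗[k] Mc) :=
    wedgePart k V p Mc ⊓ LinearMap.ker (koszulDiff k b acur)
  let B : Submodule k (ExteriorAlgebra k V ⊗[k] Mc) :=
    Submodule.map (koszulDiff k b aprev) (wedgePart k V (p + 1) Mp)
  letI : AddCommGroup (ExteriorAlgebra k V ⊗[k] Mc) := TensorProduct.addCommGroup
  Module.finrank k (↥Z ⧸ Submodule.comap Z.subtype B)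


section Aux

open TensorProduct

variable {k : Type*} [Field k] {V : Type*} [AddCommGroup V] [Module k V]
  {ι : Type*} [Fintype ι] [DecidableEq ι]

/-- Values of a multilinear map lie in the span of its values on basis tuples. -/
lemma aux_multilinear_mem_span (b : Module.Basis ι k V) {N : Type*} [AddCommGroup N] [Module k N]
    {n : ℕ} (f : MultilinearMap k (fun _ : Fin n => V) N) (v : Fin n → V) :
    f v ∈ Submodule.span k (Set.range fun σ : Fin n → ι => f (fun i => b (σ i))) := by
  have h1 : f v = f (fun i => ∑ j, b.repr (v i) j • b j) := by
    congr 1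
    funext i
    exact (b.sum_repr (v i)).symm
  rw [h1, MultilinearMap.map_sum]
  refine Submodule.sum_mem _ fun r _ => ?_
  rw [f.map_smul_univ]
  exact Submodule.smul_mem _ _ (Submodule.subset_span ⟨r, rfl⟩)

/-- The exterior power of a finite-dimensional space is finite-dimensional. -/
lemma aux_exteriorPower_finite (b : Module.Basis ι k V) (p : ℕ) :
    Module.Finite k ↥(⋀[k]^p V) := by
  have hspan : (⋀[k]^p V) =
      Submodule.span k (Set.range fun σ : Fin p → ι =>
        ExteriorAlgebra.ιMulti k p (fun i => b (σ i))) := by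
    refine le_antisymm ?_ ?_
    · rw [← ExteriorAlgebra.ιMulti_span_fixedDegree, Submodule.span_le]
      rintro _ ⟨v, rfl⟩
      exact aux_multilinear_mem_span b (ExteriorAlgebra.ιMulti k p).toMultilinearMap v
    · rw [Submodule.span_le]
      rintro _ ⟨σ, rfl⟩
      exact ExteriorAlgebra.ιMulti_range k p ⟨_, rfl⟩
  rw [hspan]
  exact Module.Finite.span_of_finite k (Set.finite_range _)

/-- The Koszul differential commutes with degreewise maps compatible with the actions. -/
lemma aux_koszulDiff_comm (b : Module.Basis ι k V) {M N M' N' : Type*}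
    [AddCommGroup M] [Module k M] [AddCommGroup N] [Module k N]
    [AddCommGroup M'] [Module k M'] [AddCommGroup N'] [Module k N']
    (a : V →ₗ[k] M →ₗ[k] N) (a' : V →ₗ[k] M' →ₗ[k] N')
    (f : M →ₗ[k] M') (g : N →ₗ[k] N')
    (h : ∀ (v : V) (m : M), g (a v m) = a' v (f m))
    (x : ExteriorAlgebra k V ⊗[k] M) :
    TensorProduct.map LinearMap.id g (koszulDiff k b a x) =
      koszulDiff k b a' (TensorProduct.map LinearMap.id f x) := by
  unfold koszulDiff
  simp only [LinearMap.sum_apply, map_sum]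
  refine Finset.sum_congr rfl fun i _ => ?_
  rw [← LinearMap.comp_apply, ← LinearMap.comp_apply, ← TensorProduct.map_comp,
    ← TensorProduct.map_comp, LinearMap.id_comp, LinearMap.comp_id]
  congr 2
  ext m
  exact h (b i) m

/-- `id ⊗ f` maps `wedgePart` into `wedgePart`. -/
lemma aux_wedgePart_map_le {M N : Type*} [AddCommGroup M] [Module k M]
    [AddCommGroup N] [Module k N] (f : M →ₗ[k] N) (p : ℕ) :
    Submodule.map
      (TensorProduct.map (LinearMap.id (R := k) (M := ExteriorAlgebra k V)) f)
      (wedgePart k V p M) ≤ wedgePart k V p N := by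
  rintro _ ⟨_, ⟨z, rfl⟩, rfl⟩
  refine ⟨TensorProduct.map LinearMap.id f z, ?_⟩
  rw [← LinearMap.comp_apply, ← LinearMap.comp_apply, ← TensorProduct.map_comp,
    ← TensorProduct.map_comp]
  simp only [LinearMap.id_comp, LinearMap.comp_id]

/-- If `f` is surjective, `id ⊗ f` maps `wedgePart` onto `wedgePart`. -/
lemma aux_wedgePart_map_surj {M N : Type*} [AddCommGroup M] [Module k M]
    [AddCommGroup N] [Module k N] (f : M →ₗ[k] N) (hf : Function.Surjective f) (p : ℕ) :
    wedgePart k V p N ≤ Submodule.map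
      (TensorProduct.map (LinearMap.id (R := k) (M := ExteriorAlgebra k V)) f)
      (wedgePart k V p M) := by
  rintro _ ⟨z, rfl⟩
  have hs : Function.Surjective
      (TensorProduct.map (LinearMap.id (R := k) (M := ↥(⋀[k]^p V))) f) :=
    LinearMap.lTensor_surjective _ hf
  obtain ⟨w, hw⟩ := hs z
  refine ⟨TensorProduct.map (⋀[k]^p V).subtype LinearMap.id w, ⟨w, rfl⟩, ?_⟩
  rw [← hw, ← LinearMap.comp_apply, ← LinearMap.comp_apply, ← TensorProduct.map_comp,
    ← TensorProduct.map_comp]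
  simp only [LinearMap.id_comp, LinearMap.comp_id]

end Aux

set_option maxHeartbeats 1600000 in
/-- Let `S = Sym V` be a polynomial ring over a field `k` and `0 → K → A → B → 0` a short
exact sequence of finitely generated graded `S`-modules (given by graded pieces with
multiplication actions and degree-preserving maps `iK, π`). If `K_ℓ = 0` for all `ℓ ≤ q+1`,
then for every `p ≥ 0` the induced map `Tor_p(A,k)_{p+q+1} → Tor_p(B,k)_{p+q+1}` on Koszul
cohomology (with middle term `⋀^p V ⊗ A_{q+1}`) is injective: every cycle of `A` mapping to
a boundary of `B` is a boundary of `A`. In particular `β_{p,q+1}(A) ≤ β_{p,q+1}(B)`. -/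
theorem stmt_16 (k : Type*) [Field k] {V : Type*} [AddCommGroup V] [Module k V]
    [FiniteDimensional k V]
    {ι : Type*} [Fintype ι] [DecidableEq ι] (b : Module.Basis ι k V)
    (K A B : ℤ → Type*)
    [∀ q, AddCommGroup (K q)] [∀ q, Module k (K q)] [∀ q, FiniteDimensional k (K q)]
    [∀ q, AddCommGroup (A q)] [∀ q, Module k (A q)] [∀ q, FiniteDimensional k (A q)]
    [∀ q, AddCommGroup (B q)] [∀ q, Module k (B q)] [∀ q, FiniteDimensional k (B q)]
    (aK : ∀ q : ℤ, V →ₗ[k] K q →ₗ[k] K (q + 1))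
    (aA : ∀ q : ℤ, V →ₗ[k] A q →ₗ[k] A (q + 1))
    (aB : ∀ q : ℤ, V →ₗ[k] B q →ₗ[k] B (q + 1))
    (hcommA : ∀ (q : ℤ) (s u : V) (m : A q), aA (q+1) s (aA q u m) = aA (q+1) u (aA q s m))
    (hfgA : ∃ q₀ : ℤ, ∀ q < q₀, ∀ m : A q, m = 0)
    (hfgB : ∃ q₀ : ℤ, ∀ q < q₀, ∀ m : B q, m = 0)
    (iK : ∀ q : ℤ, K q →ₗ[k] A q) (π : ∀ q : ℤ, A q →ₗ[k] B q)
    (hiK_inj : ∀ q, Function.Injective (iK q))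
    (hπ_surj : ∀ q, Function.Surjective (π q))
    (hexact : ∀ q : ℤ, LinearMap.ker (π q) = LinearMap.range (iK q))
    (hiK_compat : ∀ (q : ℤ) (v : V) (m : K q), iK (q+1) (aK q v m) = aA q v (iK q m))
    (hπ_compat : ∀ (q : ℤ) (v : V) (m : A q), π (q+1) (aA q v m) = aB q v (π q m))
    (q : ℤ) (hK : ∀ ℓ : ℤ, ℓ ≤ q + 1 → ∀ x : K ℓ, x = 0) (p : ℕ) :
    (∀ x ∈ wedgePart k V p (A (q+1)) ⊓ LinearMap.ker (koszulDiff k b (aA (q+1))),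
        (TensorProduct.map LinearMap.id (π (q+1))) x ∈
          Submodule.map (koszulDiff k b (aB q)) (wedgePart k V (p + 1) (B q)) →
        x ∈ Submodule.map (koszulDiff k b (aA q)) (wedgePart k V (p + 1) (A q)))
    ∧ koszulBetti k b (aA q) (aA (q+1)) p ≤ koszulBetti k b (aB q) (aB (q+1)) p := by
  classical
  -- π is an isomorphism in degrees q and q+1
  have hπq_inj : Function.Injective (π q) := by
    have : LinearMap.ker (π q) = ⊥ := by
      rw [hexact q, eq_bot_iff]
      rintro _ ⟨y, rfl⟩
      rw [hK q (by linarith) y]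
      simp
    exact LinearMap.ker_eq_bot.mp this
  have hπq1_inj : Function.Injective (π (q+1)) := by
    have : LinearMap.ker (π (q+1)) = ⊥ := by
      rw [hexact (q+1), eq_bot_iff]
      rintro _ ⟨y, rfl⟩
      rw [hK (q+1) le_rfl y]
      simp
    exact LinearMap.ker_eq_bot.mp this
  have hT1_inj : Function.Injective
      (TensorProduct.map (LinearMap.id (R := k) (M := ExteriorAlgebra k V)) (π (q+1))) :=
    Module.Flat.lTensor_preserves_injective_linearMap (M := ExteriorAlgebra k V) _ hπq1_inj
  -- commutation of the Koszul differential with id ⊗ π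
  have hc0 : ∀ x, TensorProduct.map LinearMap.id (π (q+1)) (koszulDiff k b (aA q) x) =
      koszulDiff k b (aB q) (TensorProduct.map LinearMap.id (π q) x) :=
    aux_koszulDiff_comm b (aA q) (aB q) (π q) (π (q+1)) (fun v m => hπ_compat q v m)
  have hc1 : ∀ x, TensorProduct.map LinearMap.id (π (q+1+1)) (koszulDiff k b (aA (q+1)) x) =
      koszulDiff k b (aB (q+1)) (TensorProduct.map LinearMap.id (π (q+1)) x) :=
    aux_koszulDiff_comm b (aA (q+1)) (aB (q+1)) (π (q+1)) (π (q+1+1))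
      (fun v m => hπ_compat (q+1) v m)
  -- main injectivity claim
  have key : ∀ x ∈ wedgePart k V p (A (q+1)) ⊓ LinearMap.ker (koszulDiff k b (aA (q+1))),
      (TensorProduct.map LinearMap.id (π (q+1))) x ∈
        Submodule.map (koszulDiff k b (aB q)) (wedgePart k V (p + 1) (B q)) →
      x ∈ Submodule.map (koszulDiff k b (aA q)) (wedgePart k V (p + 1) (A q)) := by
    intro x _ hmem
    obtain ⟨y, hy, hdy⟩ := hmem
    obtain ⟨y', hy', hyy⟩ := aux_wedgePart_map_surj (π q) (hπ_surj q) (p+1) hy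
    refine ⟨y', hy', hT1_inj ?_⟩
    rw [hc0 y', hyy, hdy]
  refine ⟨key, ?_⟩
  letI : AddCommGroup (ExteriorAlgebra k V ⊗[k] A (q+1)) := TensorProduct.addCommGroup
  letI : AddCommGroup (ExteriorAlgebra k V ⊗[k] B (q+1)) := TensorProduct.addCommGroup
  -- Betti number inequality
  set ZA : Submodule k (ExteriorAlgebra k V ⊗[k] A (q+1)) :=
    wedgePart k V p (A (q+1)) ⊓ LinearMap.ker (koszulDiff k b (aA (q+1))) with hZA
  set BA : Submodule k (ExteriorAlgebra k V ⊗[k] A (q+1)) :=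
    Submodule.map (koszulDiff k b (aA q)) (wedgePart k V (p + 1) (A q)) with hBA
  set ZB : Submodule k (ExteriorAlgebra k V ⊗[k] B (q+1)) :=
    wedgePart k V p (B (q+1)) ⊓ LinearMap.ker (koszulDiff k b (aB (q+1))) with hZB
  set BB : Submodule k (ExteriorAlgebra k V ⊗[k] B (q+1)) :=
    Submodule.map (koszulDiff k b (aB q)) (wedgePart k V (p + 1) (B q)) with hBB
  -- the induced map on cycles
  have hφmem : ∀ x : ZA,
      TensorProduct.map LinearMap.id (π (q+1)) (ZA.subtype x) ∈ ZB := by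
    intro x
    refine ⟨aux_wedgePart_map_le (π (q+1)) p ⟨(x : ExteriorAlgebra k V ⊗[k] A (q+1)),
      x.2.1, rfl⟩, ?_⟩
    have hx0 : koszulDiff k b (aA (q+1)) (x : ExteriorAlgebra k V ⊗[k] A (q+1)) = 0 := x.2.2
    show koszulDiff k b (aB (q+1))
        (TensorProduct.map LinearMap.id (π (q+1)) (x : ExteriorAlgebra k V ⊗[k] A (q+1))) = 0
    rw [← hc1, hx0, map_zero]
  set φ : ZA →ₗ[k] ZB :=
    LinearMap.codRestrict ZB
      ((TensorProduct.map LinearMap.id (π (q+1))) ∘ₗ ZA.subtype) hφmem with hφ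
  -- boundaries map to boundaries
  have hBmap : ∀ x ∈ BA, TensorProduct.map LinearMap.id (π (q+1)) x ∈ BB := by
    rintro _ ⟨y, hy, rfl⟩
    exact ⟨TensorProduct.map LinearMap.id (π q) y,
      aux_wedgePart_map_le (π q) (p+1) ⟨y, hy, rfl⟩, (hc0 y).symm⟩
  have hle : Submodule.comap ZA.subtype BA ≤
      LinearMap.ker ((Submodule.comap ZB.subtype BB).mkQ ∘ₗ φ) := by
    intro x hx
    rw [LinearMap.mem_ker, LinearMap.comp_apply, Submodule.mkQ_apply,
      Submodule.Quotient.mk_eq_zero]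
    exact hBmap _ hx
  set g := Submodule.liftQ (Submodule.comap ZA.subtype BA)
    ((Submodule.comap ZB.subtype BB).mkQ ∘ₗ φ) hle with hg
  have hginj : Function.Injective g := by
    rw [← LinearMap.ker_eq_bot]
    apply Submodule.ker_liftQ_eq_bot
    intro x hx
    rw [LinearMap.mem_ker, LinearMap.comp_apply, Submodule.mkQ_apply,
      Submodule.Quotient.mk_eq_zero] at hx
    exact key _ x.2 hx
  haveI : Module.Finite k ↥(⋀[k]^p V) := aux_exteriorPower_finite b p
  haveI : Module.Finite k ((↥(⋀[k]^p V)) ⊗[k] B (q+1)) := Module.Finite.tensorProduct k _ _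
  haveI : FiniteDimensional k ↥(wedgePart k V p (B (q+1))) := by
    unfold wedgePart
    exact LinearMap.finiteDimensional_range (K := k)
      (V := (↥(⋀[k]^p V)) ⊗[k] B (q+1))
      (TensorProduct.map ((⋀[k]^p V).subtype) (LinearMap.id (R := k) (M := B (q+1))))
  haveI : FiniteDimensional k ↥ZB :=
    Submodule.finiteDimensional_of_le (S₂ := wedgePart k V p (B (q+1)))
      (by rw [hZB]; exact inf_le_left)
  show Module.finrank k (↥ZA ⧸ Submodule.comap ZA.subtype BA) ≤
    Module.finrank k (↥ZB ⧸ Submodule.comap ZB.subtype BB)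
  exact LinearMap.finrank_le_finrank_of_injective hginj
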